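/- Let P be a poset and (G,f) a minimal P-filtered graph (no collapsible edges and no deletable edges). Then the sequence ⊕_{e∈E} P_{f(e)}·{e} → ⊕_{v∈V} P_{f(v)}·{v} → H₀(G,f), where the first map sends {e} to {e₁} - {e₀} and the second sends {v} to [v], is a minimal projective presentation; in particular β₀(H₀(G,f)) = Σ_{v∈V} δ_{f(v)} and β₁(H₀(G,f)) = Σ_{e∈E} δ_{f(e)}. -/

import Mathlib

structure Grph where
  V : Type
  E : Type
  [fintV : Fintype V]
  [fintE : Fintype E]
  [decV : DecidableEq V]
  [decE : DecidableEq E]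
  bnd : E → V × V

attribute [instance] Grph.fintV Grph.fintE Grph.decV Grph.decE

/-- boundary map k⟨E⟩ → k⟨V⟩, e ↦ e₁ - e₀ -/
noncomputable def Grph.d (G : Grph) (k : Type) [Field k] :
    (G.E →₀ k) →ₗ[k] (G.V →₀ k) :=
  Finsupp.linearCombination k fun e =>
    Finsupp.single (G.bnd e).2 1 - Finsupp.single (G.bnd e).1 1

def Grph.adj (G : Grph) (v w : G.V) : Prop :=
  ∃ e, G.bnd e = (v, w) ∨ G.bnd e = (w, v)

structure FGrph (P : Type) [PartialOrder P] extends Grph where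
  fV : V → P
  fE : E → P
  mono0 : ∀ e, fV (bnd e).1 ≤ fE e
  mono1 : ∀ e, fV (bnd e).2 ≤ fE e

variable {P : Type} [PartialOrder P]

/-- boundary map of the sublevel graph at grade r -/
noncomputable def FGrph.dr (G : FGrph P) (k : Type) [Field k] (r : P) :
    ({e : G.E // G.fE e ≤ r} →₀ k) →ₗ[k] ({v : G.V // G.fV v ≤ r} →₀ k) :=
  Finsupp.linearCombination k fun e =>
    Finsupp.single ⟨(G.bnd e.1).2, le_trans (G.mono1 e.1) e.2⟩ 1 -
    Finsupp.single ⟨(G.bnd e.1).1, le_trans (G.mono0 e.1) e.2⟩ 1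

noncomputable def FGrph.vmap (G : FGrph P) (k : Type) [Field k] {r s : P} (h : r ≤ s) :
    ({v : G.V // G.fV v ≤ r} →₀ k) →ₗ[k] ({v : G.V // G.fV v ≤ s} →₀ k) :=
  Finsupp.lmapDomain k k fun v => ⟨v.1, le_trans v.2 h⟩

noncomputable def FGrph.emap (G : FGrph P) (k : Type) [Field k] {r s : P} (h : r ≤ s) :
    ({e : G.E // G.fE e ≤ r} →₀ k) →ₗ[k] ({e : G.E // G.fE e ≤ s} →₀ k) :=
  Finsupp.lmapDomain k k fun e => ⟨e.1, le_trans e.2 h⟩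

lemma FGrph.dNat (G : FGrph P) (k : Type) [Field k] {r s : P} (h : r ≤ s) :
    (G.dr k s).comp (G.emap k h) = (G.vmap k h).comp (G.dr k r) := by
  apply Finsupp.lhom_ext
  intro e a
  show (G.dr k s) ((G.emap k h) (Finsupp.single e a)) =
    (G.vmap k h) ((G.dr k r) (Finsupp.single e a))
  rw [FGrph.emap, Finsupp.lmapDomain_apply, Finsupp.mapDomain_single, FGrph.dr,
    Finsupp.linearCombination_single, FGrph.dr, Finsupp.linearCombination_single,
    map_smul, map_sub, FGrph.vmap, Finsupp.lmapDomain_apply, Finsupp.lmapDomain_apply,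
    Finsupp.mapDomain_single, Finsupp.mapDomain_single]

/-- 0-dim homology of the sublevel graph at r -/
noncomputable abbrev FGrph.H0at (G : FGrph P) (k : Type) [Field k] (r : P) :=
  ({v : G.V // G.fV v ≤ r} →₀ k) ⧸ LinearMap.range (G.dr k r)

noncomputable def FGrph.H0map (G : FGrph P) (k : Type) [Field k] {r s : P} (h : r ≤ s) :
    G.H0at k r →ₗ[k] G.H0at k s :=
  Submodule.mapQ _ _ (G.vmap k h) (by
    rintro x ⟨y, rfl⟩
    exact ⟨G.emap k h y, by
      have := LinearMap.congr_fun (G.dNat k h) y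
      simpa using this⟩)

noncomputable abbrev FGrph.H1at (G : FGrph P) (k : Type) [Field k] (r : P) :=
  LinearMap.ker (G.dr k r)

noncomputable def FGrph.H1map (G : FGrph P) (k : Type) [Field k] {r s : P} (h : r ≤ s) :
    G.H1at k r →ₗ[k] G.H1at k s :=
  (G.emap k h).restrict (p := LinearMap.ker (G.dr k r)) (q := LinearMap.ker (G.dr k s))
    (by
      intro x hx
      have := LinearMap.congr_fun (G.dNat k h) x
      simp only [LinearMap.mem_ker] at hx ⊢
      simp only [LinearMap.coe_comp, Function.comp_apply] at this
      rw [this, hx, map_zero])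

def FGrph.adjAt (G : FGrph P) (r : P) (a b : G.V) : Prop :=
  ∃ e, G.fE e ≤ r ∧ (G.bnd e = (a, b) ∨ G.bnd e = (b, a))

def FGrph.connAt (G : FGrph P) (r : P) : G.V → G.V → Prop :=
  Relation.ReflTransGen (G.adjAt r)

def FGrph.pi0At (G : FGrph P) (r : P) :=
  Quot (fun a b : {v : G.V // G.fV v ≤ r} => G.adjAt r a.1 b.1)

def FGrph.Collapsible (G : FGrph P) (e : G.E) : Prop :=
  (G.bnd e).1 ≠ (G.bnd e).2 ∧
    (G.fE e = G.fV (G.bnd e).1 ∨ G.fE e = G.fV (G.bnd e).2)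

def FGrph.delete (G : FGrph P) (e : G.E) : FGrph P where
  V := G.V
  E := {d : G.E // d ≠ e}
  bnd d := G.bnd d.1
  fV := G.fV
  fE d := G.fE d.1
  mono0 d := G.mono0 d.1
  mono1 d := G.mono1 d.1

def FGrph.Deletable (G : FGrph P) (e : G.E) : Prop :=
  (G.delete e).connAt (G.fE e) (G.bnd e).1 (G.bnd e).2

def FGrph.collapse (G : FGrph P) (e : G.E) (x y : G.V) (hxy : y ≠ x)
    (hf : G.fV y ≤ G.fV x) : FGrph P where
  V := {v : G.V // v ≠ x}
  E := {d : G.E // d ≠ e}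
  bnd d :=
    (if h : (G.bnd d.1).1 = x then ⟨y, hxy⟩ else ⟨(G.bnd d.1).1, h⟩,
     if h : (G.bnd d.1).2 = x then ⟨y, hxy⟩ else ⟨(G.bnd d.1).2, h⟩)
  fV v := G.fV v.1
  fE d := G.fE d.1
  mono0 d := by
    dsimp only
    split
    · exact le_trans hf (by rw [← ‹(G.bnd d.1).1 = x›]; exact G.mono0 d.1)
    · exact G.mono0 d.1
  mono1 d := by
    dsimp only
    split
    · exact le_trans hf (by rw [← ‹(G.bnd d.1).2 = x›]; exact G.mono1 d.1)
    · exact G.mono1 d.1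

/-- A `P`-persistence module: a functor `P → Vec_k`, given explicitly. -/
structure PersMod (P : Type) [PartialOrder P] (k : Type) [Field k] : Type 1 where
  obj : P → Type
  [acg : ∀ r, AddCommGroup (obj r)]
  [mod : ∀ r, Module k (obj r)]
  map : ∀ {r s : P}, r ≤ s → (obj r →ₗ[k] obj s)
  map_refl : ∀ (r : P) (x : obj r), map (le_refl r) x = x
  map_trans : ∀ {r s t : P} (h1 : r ≤ s) (h2 : s ≤ t) (x : obj r),
    map h2 (map h1 x) = map (le_trans h1 h2) x

attribute [instance] PersMod.acg PersMod.mod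

variable {P : Type} [PartialOrder P]

/-- A morphism of persistence modules: a natural transformation. -/
structure PersHom (k : Type) [Field k] (M N : PersMod P k) where
  app : ∀ r : P, M.obj r →ₗ[k] N.obj r
  nat : ∀ {r s : P} (h : r ≤ s) (x : M.obj r),
    app s (M.map h x) = N.map h (app r x)

/-- The finite direct sum of indicator projectives `⊕_{i ∈ I} P_{f i}`:
at grade `r` it is the free vector space on `{i // f i ≤ r}`, with structure maps
induced by the inclusions of index sets.  For `I = Unit` this is the indicator
projective `P_{f ()}` itself. -/
noncomputable def freePers (k : Type) [Field k] (I : Type) (f : I → P) : PersMod P k where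
  obj r := {i : I // f i ≤ r} →₀ k
  map h := Finsupp.lmapDomain k k fun i => ⟨i.1, le_trans i.2 h⟩
  map_refl r x := by
    rw [Finsupp.lmapDomain_apply,
      show (fun i : {i : I // f i ≤ r} => (⟨i.1, le_trans i.2 (le_refl r)⟩ :
        {i : I // f i ≤ r})) = id from rfl, Finsupp.mapDomain_id]
  map_trans h1 h2 x := by
    rw [Finsupp.lmapDomain_apply, Finsupp.lmapDomain_apply, Finsupp.lmapDomain_apply,
      ← Finsupp.mapDomain_comp]
    rfl

/-- A morphism of persistence modules is surjective if it is so at every grade. -/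
def PersHom.Surj {k : Type} [Field k] {M N : PersMod P k} (g : PersHom k M N) : Prop :=
  ∀ r : P, Function.Surjective (g.app r)
/-- `g : ⊕_{i∈I} P_{f i} → M` is a finite projective cover: it is surjective and the
total number of indecomposable summands is minimal among all such surjections. -/
def IsProjCover {k : Type} [Field k] {I : Type} [Fintype I] (f : I → P) (M : PersMod P k)
    (g : PersHom k (freePers k I f) M) : Prop :=
  g.Surj ∧ ∀ (J : Type) (_ : Fintype J) (f' : J → P)
    (g' : PersHom k (freePers k J f') M), g'.Surj →
      Fintype.card I ≤ Fintype.card J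
/-- H₀ of a filtered graph as a persistence module -/
noncomputable def FGrph.H0Mod (G : FGrph P) (k : Type) [Field k] : PersMod P k where
  obj r := G.H0at k r
  map h := G.H0map k h
  map_refl r x := by
    obtain ⟨y, rfl⟩ := Submodule.Quotient.mk_surjective _ x
    show G.H0map k (le_refl r) (Submodule.Quotient.mk y) = Submodule.Quotient.mk y
    rw [FGrph.H0map, Submodule.mapQ_apply]
    congr 1
    rw [FGrph.vmap, Finsupp.lmapDomain_apply,
      show (fun v : {v : G.V // G.fV v ≤ r} => (⟨v.1, le_trans v.2 (le_refl r)⟩ :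
        {v : G.V // G.fV v ≤ r})) = id from rfl, Finsupp.mapDomain_id]
  map_trans h1 h2 x := by
    obtain ⟨y, rfl⟩ := Submodule.Quotient.mk_surjective _ x
    show G.H0map k h2 (G.H0map k h1 (Submodule.Quotient.mk y)) =
      G.H0map k (le_trans h1 h2) (Submodule.Quotient.mk y)
    rw [FGrph.H0map, FGrph.H0map, FGrph.H0map, Submodule.mapQ_apply,
      Submodule.mapQ_apply, Submodule.mapQ_apply]
    congr 1
    rw [FGrph.vmap, FGrph.vmap, FGrph.vmap, Finsupp.lmapDomain_apply,
      Finsupp.lmapDomain_apply, Finsupp.lmapDomain_apply, ← Finsupp.mapDomain_comp]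
    rfl

/-- The canonical surjection `⊕_{v∈V} P_{f(v)} → H₀(G,f)`, sending `{v}` to `[v]`. -/
noncomputable def FGrph.covHom (G : FGrph P) (k : Type) [Field k] :
    PersHom k (freePers k G.V G.fV) (G.H0Mod k) where
  app r := (LinearMap.range (G.dr k r)).mkQ
  nat {r s} h x := by
    show (LinearMap.range (G.dr k s)).mkQ ((freePers k G.V G.fV).map h x) =
      G.H0map k h ((LinearMap.range (G.dr k r)).mkQ x)
    first
      | rfl
      | exact (Submodule.mapQ_apply _ _ _ _ x).symm

/-- The kernel of the projective cover `⊕_v P_{f(v)} → H₀(G,f)`, i.e. the image of the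
boundary map, as a persistence module. -/
noncomputable def FGrph.KMod (G : FGrph P) (k : Type) [Field k] : PersMod P k where
  obj r := ↥(LinearMap.range (G.dr k r))
  map {r s} h := (G.vmap k h).restrict
    (p := LinearMap.range (G.dr k r)) (q := LinearMap.range (G.dr k s)) (by
      rintro x ⟨y, rfl⟩
      exact ⟨G.emap k h y, by
        have := LinearMap.congr_fun (G.dNat k h) y
        simpa using this⟩)
  map_refl r x := Subtype.ext (by
    show (G.vmap k (le_refl r)) x.1 = x.1
    rw [FGrph.vmap, Finsupp.lmapDomain_apply,
      show (fun v : {v : G.V // G.fV v ≤ r} => (⟨v.1, le_trans v.2 (le_refl r)⟩ :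
        {v : G.V // G.fV v ≤ r})) = id from rfl, Finsupp.mapDomain_id])
  map_trans {r s t} h1 h2 x := Subtype.ext (by
    show (G.vmap k h2) ((G.vmap k h1) x.1) = (G.vmap k (le_trans h1 h2)) x.1
    rw [FGrph.vmap, FGrph.vmap, FGrph.vmap, Finsupp.lmapDomain_apply,
      Finsupp.lmapDomain_apply, Finsupp.lmapDomain_apply, ← Finsupp.mapDomain_comp]
    rfl)

/-- The morphism `⊕_{e∈E} P_{f(e)} → ker(⊕_v P_{f(v)} → H₀(G,f))` induced by
`{e} ↦ {e₁} - {e₀}`. -/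
noncomputable def FGrph.kerCov (G : FGrph P) (k : Type) [Field k] :
    PersHom k (freePers k G.E G.fE) (G.KMod k) where
  app r := (G.dr k r).rangeRestrict
  nat {r s} h x := Subtype.ext (by
    show (G.dr k s) ((freePers k G.E G.fE).map h x) = (G.vmap k h) ((G.dr k r) x)
    exact LinearMap.congr_fun (G.dNat k h) x)

namespace MinAux

open Module

lemma finrank_le_of_surj {k V W : Type} [Field k] [AddCommGroup V] [Module k V]
    [AddCommGroup W] [Module k W] [Module.Finite k V] (f : V →ₗ[k] W)
    (hf : Function.Surjective f) : finrank k W ≤ finrank k V := by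
  calc finrank k W = finrank k (⊤ : Submodule k W) := (finrank_top k W).symm
    _ = finrank k (LinearMap.range f) := by rw [LinearMap.range_eq_top.mpr hf]
    _ ≤ finrank k V := f.finrank_range_le

lemma finrank_finsupp' (k ι : Type) [Field k] [Fintype ι] :
    finrank k (ι →₀ k) = Fintype.card ι := by
  rw [(Finsupp.linearEquivFunOnFinite k k ι).finrank_eq, Module.finrank_fintype_fun_eq_card]

/-- the submodule of `M.obj p` generated by everything coming from strictly below `p` -/
noncomputable def belowSub {P : Type} [PartialOrder P] (k : Type) [Field k]
    (M : PersMod P k) (p : P) : Submodule k (M.obj p) :=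
  ⨆ r : {r : P // r < p}, LinearMap.range (M.map r.2.le)

lemma finrank_quot_le {P : Type} [PartialOrder P] (k : Type) [Field k]
    (M : PersMod P k) (p : P) (J : Type) [Fintype J] (fJ : J → P)
    (g : PersHom k (freePers k J fJ) M) (hs : g.Surj) :
    finrank k (M.obj p ⧸ belowSub k M p) ≤ Nat.card {j : J // fJ j = p} := by
  classical
  haveI : Fintype {j : J // fJ j = p} := Fintype.ofFinite _
  haveI : Fintype {j : J // fJ j ≤ p} := Fintype.ofFinite _
  set T : ((freePers k J fJ).obj p) →ₗ[k] M.obj p ⧸ belowSub k M p :=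
    (belowSub k M p).mkQ ∘ₗ g.app p with hTdef
  have hT : Function.Surjective T := (Submodule.mkQ_surjective _).comp (hs p)
  set σ : ({j : J // fJ j = p} →₀ k) →ₗ[k] M.obj p ⧸ belowSub k M p :=
    Finsupp.linearCombination k
      (fun j : {j : J // fJ j = p} => T (Finsupp.single ⟨j.1, le_of_eq j.2⟩ 1)) with hσdef
  have hmem : ∀ x : ((freePers k J fJ).obj p), T x ∈ LinearMap.range σ := by
    intro x
    induction x using Finsupp.induction_linear with
    | zero => exact (congrArg (· ∈ LinearMap.range σ) (map_zero T)).mpr (zero_mem _)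
    | add f g hf hg =>
      exact (congrArg (· ∈ LinearMap.range σ) (map_add T f g)).mpr (add_mem hf hg)
    | single j a =>
      rcases eq_or_lt_of_le j.2 with hj | hj
      · refine ⟨Finsupp.single ⟨j.1, hj⟩ a, ?_⟩
        rw [hσdef, Finsupp.linearCombination_single]
        exact (map_smul T a _).symm.trans (congrArg T
          (show (a • Finsupp.single (⟨j.1, hj.le⟩ : {i : J // fJ i ≤ p}) (1:k) :
              {i : J // fJ i ≤ p} →₀ k) = Finsupp.single j a by
            rw [Finsupp.smul_single, smul_eq_mul, mul_one]))
      · have h0 : T (Finsupp.single j a) = 0 := by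
          have h1 : (Finsupp.single j a : (freePers k J fJ).obj p)
              = (freePers k J fJ).map hj.le (Finsupp.single ⟨j.1, le_refl _⟩ a) := by
            show _ = Finsupp.mapDomain _ _
            rw [Finsupp.mapDomain_single]
          rw [hTdef]
          show Submodule.mkQ _ (g.app p (Finsupp.single j a)) = 0
          refine (Submodule.Quotient.mk_eq_zero (p := belowSub k M p)).mpr ?_
          rw [h1]
          refine (congrArg (· ∈ belowSub k M p) (g.nat hj.le _)).mpr ?_
          exact (le_iSup (fun r : {r : P // r < p} =>
            LinearMap.range (M.map r.2.le)) ⟨fJ j.1, hj⟩) ⟨_, rfl⟩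
        rw [h0]; exact zero_mem _
  have hσ : Function.Surjective σ := by
    intro y
    obtain ⟨x, rfl⟩ := hT y
    exact hmem x
  calc finrank k (M.obj p ⧸ belowSub k M p) ≤ finrank k ({j : J // fJ j = p} →₀ k) :=
        finrank_le_of_surj σ hσ
    _ = Fintype.card {j : J // fJ j = p} := finrank_finsupp' k _
    _ = Nat.card {j : J // fJ j = p} := (Nat.card_eq_fintype_card).symm

end MinAux
namespace MinAux

open Module

variable {P : Type} [PartialOrder P]

lemma lowerV (k : Type) [Field k] (G : FGrph P) (hC : ∀ e : G.E, ¬ G.Collapsible e) (p : P) :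
    Nat.card {v : G.V // G.fV v = p} ≤
      finrank k ((G.H0Mod k).obj p ⧸ belowSub k (G.H0Mod k) p) := by
  classical
  haveI : Fintype {v : G.V // G.fV v = p} := Fintype.ofFinite _
  haveI : Fintype {v : G.V // G.fV v ≤ p} := Fintype.ofFinite _
  haveI : Module.Finite k ((G.H0Mod k).obj p) :=
    inferInstanceAs (Module.Finite k
      (({v : G.V // G.fV v ≤ p} →₀ k) ⧸ LinearMap.range (G.dr k p)))
  set φ : ({v : G.V // G.fV v ≤ p} →₀ k) →ₗ[k] ({v : G.V // G.fV v = p} →₀ k) :=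
    Finsupp.linearCombination k
      (fun v : {v : G.V // G.fV v ≤ p} =>
        if h : G.fV v.1 = p then Finsupp.single ⟨v.1, h⟩ 1 else 0) with hφdef
  -- φ kills the boundaries
  have hφd : LinearMap.range (G.dr k p) ≤ LinearMap.ker φ := by
    rintro x ⟨y, rfl⟩
    have hcomp : φ ∘ₗ (G.dr k p) = 0 := by
      apply Finsupp.lhom_ext
      intro e a
      show φ ((G.dr k p) (Finsupp.single e a)) = 0
      rw [FGrph.dr, Finsupp.linearCombination_single, map_smul, map_sub]
      by_cases hloop : (G.bnd e.1).1 = (G.bnd e.1).2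
      · have hx : (⟨(G.bnd e.1).2, le_trans (G.mono1 e.1) e.2⟩ : {v : G.V // G.fV v ≤ p})
            = ⟨(G.bnd e.1).1, le_trans (G.mono0 e.1) e.2⟩ := Subtype.ext hloop.symm
        rw [hx, sub_self, smul_zero]
      · have h1 : G.fV (G.bnd e.1).1 ≠ p := fun hp =>
          hC e.1 ⟨hloop, Or.inl (le_antisymm (le_trans e.2 hp.ge) (G.mono0 e.1))⟩
        have h2 : G.fV (G.bnd e.1).2 ≠ p := fun hp =>
          hC e.1 ⟨hloop, Or.inr (le_antisymm (le_trans e.2 hp.ge) (G.mono1 e.1))⟩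
        rw [hφdef, Finsupp.linearCombination_single, Finsupp.linearCombination_single,
          dif_neg h1, dif_neg h2, smul_zero, sub_self, smul_zero]
    show φ ((G.dr k p) y) = 0
    rw [← LinearMap.comp_apply, hcomp, LinearMap.zero_apply]
  set φq : ((G.H0Mod k).obj p) →ₗ[k] ({v : G.V // G.fV v = p} →₀ k) :=
    Submodule.liftQ _ φ hφd with hφqdef
  have hφq : belowSub k (G.H0Mod k) p ≤ LinearMap.ker φq := by
    rw [belowSub]
    apply iSup_le
    rintro r x ⟨z, rfl⟩
    obtain ⟨y, rfl⟩ := Submodule.Quotient.mk_surjective (LinearMap.range (G.dr k r.1)) z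
    show φq ((G.H0map k r.2.le) (Submodule.Quotient.mk y)) = 0
    rw [FGrph.H0map, Submodule.mapQ_apply]
    show φ ((G.vmap k r.2.le) y) = 0
    have hcomp : φ ∘ₗ (G.vmap k r.2.le) = 0 := by
      apply Finsupp.lhom_ext
      intro v a
      show φ ((G.vmap k r.2.le) (Finsupp.single v a)) = 0
      rw [FGrph.vmap, Finsupp.lmapDomain_apply, Finsupp.mapDomain_single, hφdef,
        Finsupp.linearCombination_single, dif_neg (fun hp : G.fV v.1 = p =>
          absurd (lt_of_le_of_lt ((le_of_eq hp.symm).trans v.2) r.2) (lt_irrefl p)), smul_zero]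
    rw [← LinearMap.comp_apply, hcomp, LinearMap.zero_apply]
  set φf := Submodule.liftQ _ φq hφq with hφfdef
  have hφs : Function.Surjective φ := by
    intro y
    induction y using Finsupp.induction_linear with
    | zero => exact ⟨0, map_zero φ⟩
    | add f g hf hg =>
      obtain ⟨a, ha⟩ := hf; obtain ⟨b, hb⟩ := hg
      exact ⟨a + b, by rw [map_add, ha, hb]⟩
    | single v b =>
      refine ⟨Finsupp.single ⟨v.1, v.2.le⟩ b, ?_⟩
      rw [hφdef, Finsupp.linearCombination_single, dif_pos v.2, Finsupp.smul_single,
        smul_eq_mul, mul_one]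
  have hφfs : Function.Surjective φf := by
    intro y
    obtain ⟨x, hx⟩ := hφs y
    exact ⟨Submodule.Quotient.mk (Submodule.Quotient.mk x), by
      show φ x = y
      exact hx⟩
  calc Nat.card {v : G.V // G.fV v = p} = Fintype.card {v : G.V // G.fV v = p} :=
        Nat.card_eq_fintype_card
    _ = finrank k ({v : G.V // G.fV v = p} →₀ k) := (finrank_finsupp' k _).symm
    _ ≤ finrank k ((G.H0Mod k).obj p ⧸ belowSub k (G.H0Mod k) p) :=
        finrank_le_of_surj φf hφfs

end MinAux
namespace MinAux

open Module

variable {P : Type} [PartialOrder P]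

lemma lowerE (k : Type) [Field k] (G : FGrph P)
    (hmin : ∀ e : G.E, ¬ G.Collapsible e ∧ ¬ G.Deletable e) (p : P) :
    Nat.card {e : G.E // G.fE e = p} ≤
      finrank k ((G.KMod k).obj p ⧸ belowSub k (G.KMod k) p) := by
  classical
  haveI : Fintype {e : G.E // G.fE e = p} := Fintype.ofFinite _
  haveI : Fintype {v : G.V // G.fV v ≤ p} := Fintype.ofFinite _
  haveI : Module.Finite k ((G.KMod k).obj p) :=
    inferInstanceAs (Module.Finite k ↥(LinearMap.range (G.dr k p)))
  set emb : {e : G.E // G.fE e = p} → {e : G.E // G.fE e ≤ p} :=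
    fun e => ⟨e.1, e.2.le⟩ with hembdef
  have hembinj : Function.Injective emb := by
    intro x y h
    have h' : (emb x).1 = (emb y).1 := congrArg Subtype.val h
    exact Subtype.ext h'
  set w : {e : G.E // G.fE e = p} → ((G.KMod k).obj p ⧸ belowSub k (G.KMod k) p) :=
    fun e => Submodule.Quotient.mk ((G.dr k p).rangeRestrict (Finsupp.single (emb e) 1))
    with hwdef
  set T : Submodule k ({v : G.V // G.fV v ≤ p} →₀ k) :=
    Submodule.span k (Set.range fun e' : {e' : G.E // G.fE e' < p} =>
      (G.dr k p) (Finsupp.single ⟨e'.1, e'.2.le⟩ 1)) with hTdef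
  have hli : LinearIndependent k w := by
    rw [linearIndependent_iff]
    intro l hl
    have hfactor : Finsupp.linearCombination k w =
        (belowSub k (G.KMod k) p).mkQ ∘ₗ (G.dr k p).rangeRestrict ∘ₗ
          Finsupp.lmapDomain k k emb := by
      apply Finsupp.lhom_ext
      intro e b
      show Finsupp.linearCombination k w (Finsupp.single e b) =
        Submodule.mkQ _ ((G.dr k p).rangeRestrict
          (Finsupp.mapDomain emb (Finsupp.single e b)))
      rw [Finsupp.linearCombination_single, Finsupp.mapDomain_single,
        show (Finsupp.single (emb e) b : {e : G.E // G.fE e ≤ p} →₀ k)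
            = b • Finsupp.single (emb e) 1 from by
          rw [Finsupp.smul_single, smul_eq_mul, mul_one],
        map_smul]
      exact (map_smul (belowSub k (G.KMod k) p).mkQ b
        ((G.dr k p).rangeRestrict (Finsupp.single (emb e) 1))).symm
    have hbel : (G.dr k p).rangeRestrict (Finsupp.lmapDomain k k emb l) ∈
        belowSub k (G.KMod k) p := by
      refine (Submodule.Quotient.mk_eq_zero (p := belowSub k (G.KMod k) p)).mp ?_
      have h0 := hl
      rw [hfactor] at h0
      exact h0
    have hsubT : Submodule.map (LinearMap.range (G.dr k p)).subtype
        (belowSub k (G.KMod k) p) ≤ T := by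
      rw [belowSub]
      refine (Submodule.map_iSup _ _).trans_le ?_
      apply iSup_le
      intro r
      rintro x ⟨ξ, ⟨η, rfl⟩, rfl⟩
      obtain ⟨y, hy⟩ := η.2
      show ((G.KMod k).map r.2.le η).1 ∈ T
      have h1 : ((G.KMod k).map r.2.le η).1 = G.vmap k r.2.le η.1 := rfl
      have h2 := LinearMap.congr_fun (G.dNat k r.2.le) y
      simp only [LinearMap.coe_comp, Function.comp_apply] at h2
      rw [h1, ← hy, ← h2]
      clear h2 hy h1
      induction y using Finsupp.induction_linear with
      | zero => rw [map_zero, map_zero]; exact zero_mem _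
      | add f g hf hg => rw [map_add, map_add]; exact add_mem hf hg
      | single e b =>
        rw [show (G.emap k r.2.le) (Finsupp.single e b)
              = Finsupp.mapDomain (fun e : {e : G.E // G.fE e ≤ r.1} =>
                  (⟨e.1, le_trans e.2 r.2.le⟩ : {e : G.E // G.fE e ≤ p}))
                (Finsupp.single e b) from rfl,
          Finsupp.mapDomain_single,
          show (Finsupp.single (⟨e.1, le_trans e.2 r.2.le⟩ : {e : G.E // G.fE e ≤ p}) b)
              = b • Finsupp.single (⟨e.1, le_trans e.2 r.2.le⟩ :
                  {e : G.E // G.fE e ≤ p}) (1:k) from by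
            rw [Finsupp.smul_single, smul_eq_mul, mul_one],
          map_smul]
        exact Submodule.smul_mem _ _
          (Submodule.subset_span ⟨⟨e.1, lt_of_le_of_lt e.2 r.2⟩, rfl⟩)
    have hmemT : (G.dr k p) (Finsupp.lmapDomain k k emb l) ∈ T :=
      hsubT ⟨(G.dr k p).rangeRestrict (Finsupp.lmapDomain k k emb l), hbel, rfl⟩
    ext e₀
    rw [Finsupp.coe_zero, Pi.zero_apply]
    set C : G.V → Prop :=
      fun v => (G.delete e₀.1).connAt (G.fE e₀.1) (G.bnd e₀.1).1 v with hCdef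
    set lam : ({v : G.V // G.fV v ≤ p} →₀ k) →ₗ[k] k :=
      Finsupp.linearCombination k
        (fun v : {v : G.V // G.fV v ≤ p} => if C v.1 then (1:k) else 0) with hlamdef
    have hlam_edge : ∀ (e' : {e : G.E // G.fE e ≤ p}), e'.1 ≠ e₀.1 →
        lam ((G.dr k p) (Finsupp.single e' 1)) = 0 := by
      intro e' hne
      have hle : G.fE e'.1 ≤ G.fE e₀.1 := by rw [e₀.2]; exact e'.2
      have hadj1 : (G.delete e₀.1).adjAt (G.fE e₀.1) (G.bnd e'.1).1 (G.bnd e'.1).2 :=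
        ⟨⟨e'.1, hne⟩, hle, Or.inl rfl⟩
      have hadj2 : (G.delete e₀.1).adjAt (G.fE e₀.1) (G.bnd e'.1).2 (G.bnd e'.1).1 :=
        ⟨⟨e'.1, hne⟩, hle, Or.inr rfl⟩
      have hiff : C (G.bnd e'.1).1 ↔ C (G.bnd e'.1).2 :=
        ⟨fun h => h.tail hadj1, fun h => h.tail hadj2⟩
      rw [FGrph.dr, Finsupp.linearCombination_single, one_smul, map_sub, hlamdef,
        Finsupp.linearCombination_single, Finsupp.linearCombination_single, one_smul,
        one_smul, if_congr hiff.symm rfl rfl, sub_self]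
    have hlamT : ∀ x ∈ T, lam x = 0 := by
      intro x hx
      rw [hTdef] at hx
      refine Submodule.span_induction ?_ ?_ ?_ ?_ hx
      · rintro x ⟨e', rfl⟩
        exact hlam_edge ⟨e'.1, e'.2.le⟩
          (fun h => absurd e₀.2 (ne_of_lt (show G.fE e₀.1 < p by rw [← h]; exact e'.2)))
      · exact map_zero lam
      · intro x y _ _ h1 h2; rw [map_add, h1, h2, add_zero]
      · intro a x _ h1; rw [map_smul, h1, smul_zero]
    have hCa : C (G.bnd e₀.1).1 := Relation.ReflTransGen.refl
    have hCb : ¬ C (G.bnd e₀.1).2 := (hmin e₀.1).2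
    have hlam0 : lam ((G.dr k p) (Finsupp.lmapDomain k k emb l)) = 0 := hlamT _ hmemT
    have hexp : lam ((G.dr k p) (Finsupp.lmapDomain k k emb l)) = - l e₀ := by
      rw [show (Finsupp.lmapDomain k k emb l : {e : G.E // G.fE e ≤ p} →₀ k)
            = Finsupp.mapDomain emb l from rfl]
      rw [FGrph.dr, Finsupp.apply_linearCombination, Finsupp.linearCombination_apply,
        Finsupp.sum]
      rw [Finset.sum_eq_single (emb e₀)]
      · rw [Finsupp.mapDomain_apply hembinj, Function.comp_apply, map_sub, hlamdef,
          Finsupp.linearCombination_single, Finsupp.linearCombination_single, one_smul,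
          one_smul, if_pos hCa, if_neg hCb, zero_sub, smul_eq_mul, mul_neg_one]
      · intro e _ hne
        have hne' : e.1 ≠ e₀.1 := fun h => hne (Subtype.ext h)
        have h := hlam_edge e hne'
        rw [FGrph.dr, Finsupp.linearCombination_single, one_smul] at h
        rw [Function.comp_apply, h, smul_zero]
      · intro hnot
        rw [Finsupp.notMem_support_iff.mp hnot, zero_smul]
    rw [hexp] at hlam0
    exact neg_eq_zero.mp hlam0
  calc Nat.card {e : G.E // G.fE e = p}
      = Fintype.card {e : G.E // G.fE e = p} := Nat.card_eq_fintype_card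
    _ ≤ finrank k ((G.KMod k).obj p ⧸ belowSub k (G.KMod k) p) :=
        hli.fintype_card_le_finrank

end MinAux
namespace MinAux

variable {P : Type} [PartialOrder P]

lemma card_fiber_sum {I : Type} [Fintype I] (f : I → P) (A : Finset P)
    (hA : ∀ i, f i ∈ A) :
    Fintype.card I = ∑ p ∈ A, Nat.card {i : I // f i = p} := by
  classical
  rw [show Fintype.card I = (Finset.univ : Finset I).card from rfl,
    Finset.card_eq_sum_card_fiberwise (fun i _ => hA i)]
  refine Finset.sum_congr rfl ?_
  intro p _
  rw [Nat.card_eq_fintype_card, Fintype.card_subtype]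

lemma count_conclusions {I J : Type} [Fintype I] [Fintype J] (f : I → P) (g : J → P)
    (hle : ∀ p, Nat.card {i : I // f i = p} ≤ Nat.card {j : J // g j = p}) :
    Fintype.card I ≤ Fintype.card J := by
  classical
  set A := Finset.image f Finset.univ ∪ Finset.image g Finset.univ with hA
  rw [card_fiber_sum f A
      (fun i => Finset.mem_union_left _ (Finset.mem_image_of_mem f (Finset.mem_univ i))),
    card_fiber_sum g A
      (fun j => Finset.mem_union_right _ (Finset.mem_image_of_mem g (Finset.mem_univ j)))]
  exact Finset.sum_le_sum (fun p _ => hle p)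

lemma count_eq {I J : Type} [Fintype I] [Fintype J] (f : I → P) (g : J → P)
    (hle : ∀ p, Nat.card {i : I // f i = p} ≤ Nat.card {j : J // g j = p})
    (hcard : Fintype.card J ≤ Fintype.card I) :
    ∀ p, Nat.card {j : J // g j = p} = Nat.card {i : I // f i = p} := by
  classical
  intro p
  set A := Finset.image f Finset.univ ∪ Finset.image g Finset.univ with hA
  have h1 : ∀ i : I, f i ∈ A :=
    fun i => Finset.mem_union_left _ (Finset.mem_image_of_mem f (Finset.mem_univ i))
  have h2 : ∀ j : J, g j ∈ A :=
    fun j => Finset.mem_union_right _ (Finset.mem_image_of_mem g (Finset.mem_univ j))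
  by_cases hp : p ∈ A
  · have hsum : ∑ q ∈ A, Nat.card {i : I // f i = q}
        = ∑ q ∈ A, Nat.card {j : J // g j = q} := by
      refine le_antisymm (Finset.sum_le_sum fun q _ => hle q) ?_
      rw [← card_fiber_sum f A h1, ← card_fiber_sum g A h2]
      exact hcard
    exact ((Finset.sum_eq_sum_iff_of_le (fun q _ => hle q)).mp hsum p hp).symm
  · have e1 : IsEmpty {i : I // f i = p} :=
      ⟨fun x => hp (x.2 ▸ h1 x.1)⟩
    have e2 : IsEmpty {j : J // g j = p} :=
      ⟨fun x => hp (x.2 ▸ h2 x.1)⟩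
    rw [@Nat.card_of_isEmpty _ e1, @Nat.card_of_isEmpty _ e2]

end MinAux
/-- if `(G,f)` is a minimal filtered graph (no collapsible and no deletable
edges), then `⊕_{e∈E} P_{f(e)} → ⊕_{v∈V} P_{f(v)} → H₀(G,f)` is a minimal projective
presentation: the augmentation is a projective cover and the map from `⊕_e P_{f(e)}`
onto its kernel is a projective cover.  Consequently `β₀(H₀(G,f)) = Σ_{v∈V} δ_{f(v)}`
and `β₁(H₀(G,f)) = Σ_{e∈E} δ_{f(e)}` (expressed via counts for arbitrary covers). -/
theorem minimal_graph_minimal_presentation (k : Type) [Field k] (G : FGrph P)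
    (hmin : ∀ e : G.E, ¬ G.Collapsible e ∧ ¬ G.Deletable e) :
    IsProjCover G.fV (G.H0Mod k) (G.covHom k) ∧
    IsProjCover G.fE (G.KMod k) (G.kerCov k) ∧
    (∀ (J : Type) (_ : Fintype J) (fJ : J → P)
      (g' : PersHom k (freePers k J fJ) (G.H0Mod k)),
        IsProjCover fJ (G.H0Mod k) g' →
          ∀ p : P, Nat.card {j : J // fJ j = p} = Nat.card {v : G.V // G.fV v = p}) ∧
    (∀ (J : Type) (_ : Fintype J) (fJ : J → P)
      (g' : PersHom k (freePers k J fJ) (G.KMod k)),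
        IsProjCover fJ (G.KMod k) g' →
          ∀ p : P, Nat.card {j : J // fJ j = p} = Nat.card {e : G.E // G.fE e = p}) := by
  have hC : ∀ e : G.E, ¬ G.Collapsible e := fun e => (hmin e).1
  have keyV : ∀ (J : Type) (_ : Fintype J) (fJ : J → P)
      (g' : PersHom k (freePers k J fJ) (G.H0Mod k)), g'.Surj →
      ∀ p : P, Nat.card {v : G.V // G.fV v = p} ≤ Nat.card {j : J // fJ j = p} := by
    intro J instJ fJ g' hs p
    haveI := instJ
    exact le_trans (MinAux.lowerV k G hC p)
      (MinAux.finrank_quot_le k (G.H0Mod k) p J fJ g' hs)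
  have keyE : ∀ (J : Type) (_ : Fintype J) (fJ : J → P)
      (g' : PersHom k (freePers k J fJ) (G.KMod k)), g'.Surj →
      ∀ p : P, Nat.card {e : G.E // G.fE e = p} ≤ Nat.card {j : J // fJ j = p} := by
    intro J instJ fJ g' hs p
    haveI := instJ
    exact le_trans (MinAux.lowerE k G hmin p)
      (MinAux.finrank_quot_le k (G.KMod k) p J fJ g' hs)
  have covSurj : (G.covHom k).Surj := fun r => Submodule.mkQ_surjective _
  have kerSurj : (G.kerCov k).Surj := fun r => (G.dr k r).surjective_rangeRestrict
  refine ⟨⟨covSurj, ?_⟩, ⟨kerSurj, ?_⟩, ?_, ?_⟩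
  · intro J instJ f' g' hs
    exact MinAux.count_conclusions G.fV f' (keyV J instJ f' g' hs)
  · intro J instJ f' g' hs
    exact MinAux.count_conclusions G.fE f' (keyE J instJ f' g' hs)
  · rintro J instJ fJ g' ⟨hs, hmin'⟩ p
    exact MinAux.count_eq G.fV fJ (keyV J instJ fJ g' hs)
      (hmin' G.V inferInstance G.fV (G.covHom k) covSurj) p
  · rintro J instJ fJ g' ⟨hs, hmin'⟩ p
    exact MinAux.count_eq G.fE fJ (keyE J instJ fJ g' hs)
      (hmin' G.E inferInstance G.fE (G.kerCov k) kerSurj) p
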